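/- Let T : (ℝ^n)^3 → ℝ be a symmetric trilinear form and let v be a unit vector maximizing T(e,e,e) over unit vectors e. Then for every unit vector a orthogonal to v: T(a,v,v) = 0 and T(v,v,v) ≥ 2·T(v,a,a). -/

import Mathlib

theorem stmt_1 (n : ℕ)
    (T : EuclideanSpace ℝ (Fin n) →ₗ[ℝ] EuclideanSpace ℝ (Fin n) →ₗ[ℝ]
      EuclideanSpace ℝ (Fin n) →ₗ[ℝ] ℝ)
    (hsym1 : ∀ x y z, T x y z = T y x z)
    (hsym2 : ∀ x y z, T x y z = T x z y)
    (v : EuclideanSpace ℝ (Fin n)) (hv : ‖v‖ = 1)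
    (hmax : ∀ e : EuclideanSpace ℝ (Fin n), ‖e‖ = 1 → T e e e ≤ T v v v)
    (a : EuclideanSpace ℝ (Fin n)) (ha : ‖a‖ = 1) (hav : (inner ℝ a v : ℝ) = 0) :
    T a v v = 0 ∧ 2 * T v a a ≤ T v v v := by
  set A := T v v v with hA
  set B := T a v v with hB
  set C := T v a a with hC
  set D := T a a a with hD
  have e1 : T v a v = B := by rw [hsym1]
  have e2 : T v v a = B := by rw [hsym2, hsym1]
  have e3 : T a v a = C := by rw [hsym1]
  have e4 : T a a v = C := by rw [hsym2, hsym1]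
  have hexp : ∀ t : ℝ, T (v + t • a) (v + t • a) (v + t • a)
      = A + 3*t*B + 3*t^2*C + t^3*D := by
    intro t
    simp only [map_add, map_smul, LinearMap.add_apply, LinearMap.smul_apply,
      smul_eq_mul, e1, e2, e3, e4]
    ring
  have hnorm : ∀ t : ℝ, ‖v + t • a‖ = Real.sqrt (1 + t^2) := by
    intro t
    rw [show (1 : ℝ) + t^2 = ‖v‖^2 + 2 * (inner ℝ v (t • a) : ℝ) + ‖t • a‖^2 by
      rw [real_inner_smul_right, real_inner_comm, hav, norm_smul, hv, ha]
      simp [mul_pow, sq_abs]]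
    rw [← norm_add_sq_real, Real.sqrt_sq (norm_nonneg _)]
  -- the auxiliary function g
  obtain ⟨g, hg_def⟩ : ∃ g : ℝ → ℝ, g = fun u => (Real.sqrt (1 + u))^3 := ⟨_, rfl⟩
  have hg0 : g 0 = 1 := by rw [hg_def]; simp
  -- key inequality
  have hkey : ∀ t : ℝ, A + 3*t*B + 3*t^2*C + t^3*D ≤ A * g (t^2) := by
    intro t
    have hpos : (0:ℝ) < 1 + t^2 := by positivity
    have hs : (0:ℝ) < Real.sqrt (1 + t^2) := Real.sqrt_pos.2 hpos
    have he : ‖(Real.sqrt (1 + t^2))⁻¹ • (v + t • a)‖ = 1 := by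
      rw [norm_smul, hnorm]
      simp [abs_of_pos hs, inv_mul_cancel₀ hs.ne']
    have hm := hmax _ he
    have hT : T ((Real.sqrt (1 + t^2))⁻¹ • (v + t • a)) ((Real.sqrt (1 + t^2))⁻¹ • (v + t • a))
        ((Real.sqrt (1 + t^2))⁻¹ • (v + t • a))
        = ((Real.sqrt (1 + t^2))⁻¹)^3 * (A + 3*t*B + 3*t^2*C + t^3*D) := by
      simp only [map_smul, LinearMap.smul_apply, smul_eq_mul, hexp]
      ring
    rw [hT, inv_pow] at hm
    have h3 : (0:ℝ) < (Real.sqrt (1 + t^2))^3 := pow_pos hs 3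
    have := (inv_mul_le_iff₀ h3).1 hm
    simpa [hg_def, mul_comm] using this
  -- derivative of g at 0
  have hsq : HasDerivAt (fun u : ℝ => Real.sqrt (1 + u)) (1/(2*Real.sqrt (1+(0:ℝ))) * 1) 0 := by
    exact (Real.hasDerivAt_sqrt (by norm_num)).comp 0 ((hasDerivAt_id (0:ℝ)).const_add 1)
  have hg : HasDerivAt g (3/2) 0 := by
    have := hsq.pow 3
    have hfun : g = (fun u : ℝ => Real.sqrt (1 + u)) ^ 3 := by rw [hg_def]; rfl
    rw [hfun]
    exact this.congr_deriv (by norm_num [Real.sqrt_one])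
  have h2 : HasDerivAt (fun t : ℝ => t^2) (2*(0:ℝ)^1) 0 := hasDerivAt_pow 2 0
  -- Part 1 : B = 0
  have hBzero : B = 0 := by
    set F : ℝ → ℝ := fun t => A + ((3*B)*t + ((3*C)*t^2 + D*t^3)) - A * g (t^2) with hF_def
    have hmaxF : IsLocalMax F 0 := by
      refine Filter.Eventually.of_forall fun t => ?_
      have h1 := hkey t
      have h0 : F 0 = 0 := by simp [hF_def, hg0]
      rw [h0]
      simp only [hF_def]
      nlinarith [h1]
    have hg' : HasDerivAt (fun t : ℝ => g (t^2)) (3/2 * (2*(0:ℝ)^1)) 0 := by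
      have hg02 : HasDerivAt g (3/2) ((0:ℝ)^2) := by
        norm_num
        exact hg
      exact HasDerivAt.comp 0 hg02 h2
    have hpoly : HasDerivAt (fun t : ℝ => A + ((3*B)*t + ((3*C)*t^2 + D*t^3)))
        ((3*B)*1 + ((3*C)*(2*(0:ℝ)^1) + D*(3*(0:ℝ)^2))) 0 := by
      exact ((((hasDerivAt_id (0:ℝ)).const_mul (3*B)).add
        (((hasDerivAt_pow 2 0).const_mul (3*C)).add
          ((hasDerivAt_pow 3 0).const_mul D))).const_add A)
    have hF : HasDerivAt F ((3*B)*1 + ((3*C)*(2*(0:ℝ)^1) + D*(3*(0:ℝ)^2)) - A*(3/2 * (2*(0:ℝ)^1))) 0 :=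
      hpoly.sub (hg'.const_mul A)
    have hd := hmaxF.deriv_eq_zero
    rw [hF.deriv] at hd
    linarith [hd]
  -- Part 2
  refine ⟨hBzero, ?_⟩
  have hslope : Filter.Tendsto (slope g 0) (nhdsWithin 0 {(0:ℝ)}ᶜ) (nhds (3/2)) :=
    hasDerivAt_iff_tendsto_slope.1 hg
  have hsqt : Filter.Tendsto (fun t : ℝ => t^2) (nhdsWithin 0 {(0:ℝ)}ᶜ) (nhdsWithin 0 {(0:ℝ)}ᶜ) := by
    rw [tendsto_nhdsWithin_iff]
    constructor
    · have : Filter.Tendsto (fun t : ℝ => t^2) (nhds 0) (nhds ((0:ℝ)^2)) :=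
        (continuous_pow 2).tendsto 0
      simpa using this.mono_left nhdsWithin_le_nhds
    · filter_upwards [self_mem_nhdsWithin] with t ht
      simp only [Set.mem_compl_iff, Set.mem_singleton_iff] at ht ⊢
      exact pow_ne_zero 2 ht
  have hR : Filter.Tendsto (fun t : ℝ => A * slope g 0 (t^2)) (nhdsWithin 0 {(0:ℝ)}ᶜ)
      (nhds (A * (3/2))) := tendsto_const_nhds.mul (hslope.comp hsqt)
  have hL : Filter.Tendsto (fun t : ℝ => 3*C + t*D) (nhdsWithin 0 {(0:ℝ)}ᶜ) (nhds (3*C)) := by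
    have : Filter.Tendsto (fun t : ℝ => 3*C + t*D) (nhds 0) (nhds (3*C + 0*D)) :=
      (continuous_const.add (continuous_id.mul continuous_const)).tendsto 0
    simpa using this.mono_left nhdsWithin_le_nhds
  have hineq : ∀ᶠ t in nhdsWithin 0 {(0:ℝ)}ᶜ, 3*C + t*D ≤ A * slope g 0 (t^2) := by
    filter_upwards [self_mem_nhdsWithin] with t ht
    have htne : t ≠ 0 := by simpa using ht
    have ht2 : (0:ℝ) < t^2 := by positivity
    have h1 := hkey t
    rw [hBzero] at h1
    rw [slope_def_field, hg0, sub_zero, ← mul_div_assoc, le_div_iff₀ ht2]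
    nlinarith [h1]
  have := le_of_tendsto_of_tendsto hL hR hineq
  linarith [this]
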